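/- Let r ∈ (1,∞) and let g be a nonnegative radial function on ℝⁿ, decreasing in the radial direction. If the convolution map T_g(μ)(x) = ∫ g(x−y) dμ(y) satisfies ‖T_g μ‖_{L^{r,∞}} ≤ C μ(ℝⁿ) for all finite positive absolutely continuous measures μ, then g ∈ L^{r,∞}(ℝⁿ) with ‖g‖_{L^{r,∞}} ≤ C. -/

import Mathlib

open MeasureTheory Metric Set Filter
open scoped ENNReal Topology

/-- If `g` is nonnegative, radial and radially decreasing, and the convolution map
`T_g μ(x) = ∫ g(x-y) dμ(y)` satisfies `‖T_g μ‖_{L^{r,∞}} ≤ C μ(ℝⁿ)` for all finite positive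
absolutely continuous measures `μ`, then `g ∈ L^{r,∞}` with `‖g‖_{L^{r,∞}} ≤ C`. -/
private lemma ball_lemma {n : ℕ} (r : ℝ)
    (g : EuclideanSpace ℝ (Fin n) → ℝ)
    (C : ℝ≥0∞)
    (hbound : ∀ μ : Measure (EuclideanSpace ℝ (Fin n)), IsFiniteMeasure μ → μ ≪ volume →
      ∀ l : ℝ, 0 < l →
        ENNReal.ofReal l *
            (volume {x : EuclideanSpace ℝ (Fin n) |
              ENNReal.ofReal l < ∫⁻ y, ENNReal.ofReal (g (x - y)) ∂μ}) ^ (1 / r)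
          ≤ C * μ Set.univ)
    (l : ℝ) (hl : 0 < l) (hr0 : (0:ℝ) < 1 / r)
    (R δ m : ℝ) (hδ : 0 < δ) (hm : l < m)
    (hlow : ∀ x ∈ closedBall (0:EuclideanSpace ℝ (Fin n)) R,
      ∀ y ∈ ball (0:EuclideanSpace ℝ (Fin n)) δ, m ≤ g (x - y)) :
    ENNReal.ofReal l * (volume (closedBall (0:EuclideanSpace ℝ (Fin n)) R)) ^ (1/r) ≤ C := by
  set B := ball (0:EuclideanSpace ℝ (Fin n)) δ with hB
  set v := volume B with hv
  have hv0 : v ≠ 0 := (measure_ball_pos _ _ hδ).ne'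
  have hvt : v ≠ ⊤ := measure_ball_lt_top.ne
  set μ : Measure (EuclideanSpace ℝ (Fin n)) := v⁻¹ • volume.restrict B with hμ
  have hμuniv : μ Set.univ = 1 := by
    rw [hμ, Measure.smul_apply, Measure.restrict_apply MeasurableSet.univ, Set.univ_inter,
      smul_eq_mul, ENNReal.inv_mul_cancel hv0 hvt]
  have hfin : IsFiniteMeasure μ := ⟨by rw [hμuniv]; exact ENNReal.one_lt_top⟩
  have hac : μ ≪ volume := by
    intro s hs
    have h1 : volume.restrict B s ≤ volume s := Measure.restrict_le_self s
    rw [hs] at h1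
    rw [hμ, Measure.smul_apply, le_zero_iff.1 h1, smul_eq_mul, mul_zero]
  have key := hbound μ hfin hac l hl
  rw [hμuniv, mul_one] at key
  refine le_trans ?_ key
  have hsub : closedBall (0:EuclideanSpace ℝ (Fin n)) R ⊆
      {x : EuclideanSpace ℝ (Fin n) | ENNReal.ofReal l < ∫⁻ y, ENNReal.ofReal (g (x - y)) ∂μ} := by
    intro x hx
    have h1 : ENNReal.ofReal m * v ≤ ∫⁻ y, ENNReal.ofReal (g (x - y)) ∂(volume.restrict B) := by
      rw [← setLIntegral_const]
      exact lintegral_mono_ae (ae_restrict_of_forall_mem measurableSet_ball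
        (fun y hy => ENNReal.ofReal_le_ofReal (hlow x hx y hy)))
    have h2 : ∫⁻ y, ENNReal.ofReal (g (x - y)) ∂μ
        = v⁻¹ * ∫⁻ y, ENNReal.ofReal (g (x - y)) ∂(volume.restrict B) :=
      lintegral_smul_measure _ _
    show ENNReal.ofReal l < _
    rw [h2]
    calc ENNReal.ofReal l < ENNReal.ofReal m :=
          (ENNReal.ofReal_lt_ofReal_iff_of_nonneg hl.le).2 hm
      _ = v⁻¹ * (ENNReal.ofReal m * v) := by
          rw [mul_comm (ENNReal.ofReal m) v, ← mul_assoc, ENNReal.inv_mul_cancel hv0 hvt, one_mul]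
      _ ≤ _ := mul_le_mul_right h1 _
  exact mul_le_mul_right (ENNReal.rpow_le_rpow (measure_mono hsub) hr0.le) _


theorem stmt_16 {n : ℕ} (r : ℝ) (hr1 : 1 < r)
    (g : EuclideanSpace ℝ (Fin n) → ℝ) (hg0 : ∀ x, 0 ≤ g x)
    (G : ℝ → ℝ) (hgG : ∀ x : EuclideanSpace ℝ (Fin n), g x = G ‖x‖)
    (hGanti : AntitoneOn G (Set.Ici 0))
    (C : ℝ≥0∞)
    (hbound : ∀ μ : Measure (EuclideanSpace ℝ (Fin n)), IsFiniteMeasure μ → μ ≪ volume →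
      ∀ l : ℝ, 0 < l →
        ENNReal.ofReal l *
            (volume {x : EuclideanSpace ℝ (Fin n) |
              ENNReal.ofReal l < ∫⁻ y, ENNReal.ofReal (g (x - y)) ∂μ}) ^ (1 / r)
          ≤ C * μ Set.univ) :
    ∀ l : ℝ, 0 < l →
      ENNReal.ofReal l *
          (volume {x : EuclideanSpace ℝ (Fin n) | l < |g x|}) ^ (1 / r) ≤ C := by
  intro l hl
  have hr0 : (0:ℝ) < 1 / r := by
    apply one_div_pos.mpr; linarith
  have habs : {x : EuclideanSpace ℝ (Fin n) | l < |g x|}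
      = {x : EuclideanSpace ℝ (Fin n) | l < g x} := by
    ext x; simp [abs_of_nonneg (hg0 x)]
  rw [habs]
  set V := volume {x : EuclideanSpace ℝ (Fin n) | l < g x} with hV
  rcases eq_or_ne V 0 with h0 | h0
  · rw [h0, ENNReal.zero_rpow_of_pos hr0, mul_zero]; exact zero_le
  -- the key pointwise claim
  have key : ∀ b ∈ Iio V, ENNReal.ofReal l * b ^ (1/r) ≤ C := by
    intro b hb
    rw [mem_Iio] at hb
    have hSne : {x : EuclideanSpace ℝ (Fin n) | l < g x}.Nonempty := by
      rcases Set.eq_empty_or_nonempty {x : EuclideanSpace ℝ (Fin n) | l < g x} with he | hne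
      · exfalso; apply h0; rw [hV, he, measure_empty]
      · exact hne
    obtain ⟨x₀, hx₀⟩ := hSne
    have claim : ∃ R : ℝ, b ≤ volume (closedBall (0:EuclideanSpace ℝ (Fin n)) R) ∧
        ∃ m, l < m ∧ ∃ δ, 0 < δ ∧
        ∀ x ∈ closedBall (0:EuclideanSpace ℝ (Fin n)) R,
          ∀ y ∈ ball (0:EuclideanSpace ℝ (Fin n)) δ, m ≤ g (x - y) := by
      rcases subsingleton_or_nontrivial (EuclideanSpace ℝ (Fin n)) with hsub | hnt
      · -- subsingleton case
        refine ⟨0, ?_, G 0, ?_, 1, one_pos, ?_⟩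
        · refine le_trans hb.le (measure_mono fun x _ => ?_)
          rw [Subsingleton.elim x 0]; exact mem_closedBall_self le_rfl
        · have := hx₀
          rw [Set.mem_setOf_eq, hgG, Subsingleton.elim x₀ 0, norm_zero] at this
          exact this
        · intro x _ y _
          rw [hgG, Subsingleton.elim (x - y) 0, norm_zero]
      · set A := {s : ℝ | 0 ≤ s ∧ l < G s} with hA
        have hAne : A.Nonempty := ⟨‖x₀‖, norm_nonneg _, by rw [← hgG]; exact hx₀⟩
        by_cases hbdd : BddAbove A
        · -- bounded case
          set ρ := sSup A with hρ
          have hSsub : {x : EuclideanSpace ℝ (Fin n) | l < g x}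
              ⊆ closedBall (0:EuclideanSpace ℝ (Fin n)) ρ := by
            intro x hx
            have hxA : ‖x‖ ∈ A := ⟨norm_nonneg x, by rw [← hgG]; exact hx⟩
            simpa [mem_closedBall, dist_zero_right] using le_csSup hbdd hxA
          have hsphere : volume (sphere (0:EuclideanSpace ℝ (Fin n)) ρ) = 0 :=
            Measure.addHaar_sphere volume 0 ρ
          have hball : b < volume (ball (0:EuclideanSpace ℝ (Fin n)) ρ) := by
            refine lt_of_lt_of_le hb (le_trans (measure_mono hSsub) ?_)
            rw [← ball_union_sphere]
            exact (measure_union_le _ _).trans (by rw [hsphere, add_zero])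
          have hρ0 : 0 < ρ := by
            by_contra h
            push_neg at h
            rw [ball_eq_empty.mpr h, measure_empty] at hball
            exact (not_lt.2 (zero_le : 0 ≤ b)) hball
          have hcover : ball (0:EuclideanSpace ℝ (Fin n)) ρ ⊆
              ⋃ k : ℕ, closedBall (0:EuclideanSpace ℝ (Fin n)) (ρ - ρ/(k+1)) := by
            intro x hx
            rw [mem_ball, dist_zero_right] at hx
            obtain ⟨k, hk⟩ := exists_nat_gt (ρ / (ρ - ‖x‖))
            refine mem_iUnion.2 ⟨k, ?_⟩
            rw [mem_closedBall, dist_zero_right]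
            have hpos : 0 < ρ - ‖x‖ := by linarith
            have h1 : ρ / (ρ - ‖x‖) < (k:ℝ) + 1 := by linarith
            have h2 : ρ < ((k:ℝ) + 1) * (ρ - ‖x‖) := (div_lt_iff₀ hpos).1 h1
            have hk1 : (0:ℝ) < (k:ℝ) + 1 := by positivity
            have h3 : ρ/((k:ℝ)+1) < ρ - ‖x‖ := (div_lt_iff₀ hk1).2 (by nlinarith)
            linarith
          have hmon : Monotone fun k : ℕ =>
              closedBall (0:EuclideanSpace ℝ (Fin n)) (ρ - ρ/(k+1)) := by
            intro i j hij
            apply closedBall_subset_closedBall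
            have : ρ/((j:ℝ)+1) ≤ ρ/((i:ℝ)+1) := by
              apply div_le_div_of_nonneg_left hρ0.le (by positivity)
              exact_mod_cast by exact_mod_cast Nat.succ_le_succ hij
            linarith
          have hsup : b < ⨆ k : ℕ, volume
              (closedBall (0:EuclideanSpace ℝ (Fin n)) (ρ - ρ/(k+1))) := by
            refine lt_of_lt_of_le hball ?_
            rw [← Directed.measure_iUnion hmon.directed_le]
            exact measure_mono hcover
          obtain ⟨k, hk⟩ := lt_iSup_iff.1 hsup
          have hRkρ : ρ - ρ/((k:ℝ)+1) < ρ := by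
            have : 0 < ρ/((k:ℝ)+1) := by positivity
            linarith
          obtain ⟨s, hsA, hs⟩ := exists_lt_of_lt_csSup hAne hRkρ
          refine ⟨ρ - ρ/((k:ℝ)+1), hk.le, G s, hsA.2, s - (ρ - ρ/((k:ℝ)+1)), by linarith, ?_⟩
          intro x hx y hy
          rw [mem_closedBall, dist_zero_right] at hx
          rw [mem_ball, dist_zero_right] at hy
          rw [hgG]
          refine hGanti (mem_Ici.2 (norm_nonneg _)) (mem_Ici.2 hsA.1) ?_
          calc ‖x - y‖ ≤ ‖x‖ + ‖y‖ := norm_sub_le x y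
            _ ≤ s := by linarith
        · -- unbounded case
          obtain ⟨k, hk⟩ := lt_iSup_iff.1 (lt_of_lt_of_le hb (le_trans (measure_mono
            (subset_univ _)) (le_of_eq (by
              rw [← iUnion_closedBall_nat (0:EuclideanSpace ℝ (Fin n)),
                Directed.measure_iUnion]
              exact Monotone.directed_le fun i j hij =>
                closedBall_subset_closedBall (by exact_mod_cast hij)))))
          obtain ⟨s, hsA, hsk⟩ := not_bddAbove_iff.1 hbdd (k:ℝ)
          refine ⟨(k:ℝ), hk.le, G s, hsA.2, s - k, by linarith, ?_⟩
          intro x hx y hy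
          rw [mem_closedBall, dist_zero_right] at hx
          rw [mem_ball, dist_zero_right] at hy
          rw [hgG]
          refine hGanti (mem_Ici.2 (norm_nonneg _)) (mem_Ici.2 hsA.1) ?_
          calc ‖x - y‖ ≤ ‖x‖ + ‖y‖ := norm_sub_le x y
            _ ≤ s := by linarith
    obtain ⟨R, hbR, m, hm, δ, hδ, hlow⟩ := claim
    refine le_trans ?_ (ball_lemma r g C hbound l hl hr0 R δ m hδ hm hlow)
    exact mul_le_mul_right (ENNReal.rpow_le_rpow hbR hr0.le) _
  -- limiting argument
  have hmono : Monotone fun x : ℝ≥0∞ => ENNReal.ofReal l * x ^ (1/r) :=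
    fun a b hab => mul_le_mul_right (ENNReal.rpow_le_rpow hab hr0.le) _
  have hcont : Continuous fun x : ℝ≥0∞ => ENNReal.ofReal l * x ^ (1/r) :=
    (ENNReal.continuous_const_mul ENNReal.ofReal_ne_top).comp ENNReal.continuous_rpow_const
  have hVpos : 0 < V := pos_iff_ne_zero.2 h0
  have hsup : sSup (Iio V) = V := (isLUB_Iio (a := V)).sSup_eq
  have heq := hmono.map_sSup_of_continuousAt (s := Iio V) hcont.continuousAt
    (by simp [ENNReal.zero_rpow_of_pos hr0]; right; linarith)
  rw [hsup] at heq
  rw [heq]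
  refine sSup_le ?_
  rintro _ ⟨c, hc, rfl⟩
  exact key c hc
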